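/- Let y, r ∈ (0,1] and ε ∈ (0,1) with y < 1 − ε. Then M_B(y(1 + rε)/(1 + ε), y/(1 + ε)) ≥ M_B(y(1 − rε)/(1 − ε), y/(1 − ε)). -/

import Mathlib

noncomputable def MB (z θ : ℝ) : ℝ :=
  z * Real.log (θ / z) + (1 - z) * Real.log ((1 - θ) / (1 - z))

noncomputable def fB (y r u : ℝ) : ℝ :=
  -(y * (1 + r * u) / (1 + u)) * Real.log (1 + r * u)
    + (1 - y * (1 + r * u) / (1 + u)) * (Real.log (1 + u - y) - Real.log (1 + u - y * (1 + r * u)))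

/-- Positivity facts for `s ∈ [-ε, ε]`. -/
lemma mb_pos_aux (y r ε s : ℝ) (hy0 : 0 < y) (hr0 : 0 < r) (hr1 : r ≤ 1)
    (hε0 : 0 < ε) (hε1 : ε < 1) (hyε : y < 1 - ε) (hs : -ε ≤ s) (hs' : s ≤ ε) :
    0 < 1 + s ∧ 0 < 1 + r * s ∧ 0 < 1 + s - y ∧ 0 < 1 + s - y * (1 + r * s) := by
  have hyr : y * r ≤ y := by nlinarith
  have hy1 : y < 1 := by linarith
  refine ⟨by linarith, ?_, by linarith, ?_⟩
  · nlinarith [mul_nonneg hr0.le (show (0:ℝ) ≤ s + ε by linarith),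
      mul_nonneg (show (0:ℝ) ≤ 1 - r by linarith) hε0.le]
  · nlinarith [mul_nonneg (show (0:ℝ) ≤ s + ε by linarith) (show (0:ℝ) ≤ 1 - y * r by linarith),
      mul_nonneg (mul_nonneg hy0.le hr0.le) hε0.le]

/-- Derivative of `fB`. -/
lemma mb_hasDeriv (y r s : ℝ) (h1 : (1:ℝ) + s ≠ 0) (h2 : (1:ℝ) + r * s ≠ 0)
    (h3 : (1:ℝ) + s - y ≠ 0) (h4 : (1:ℝ) + s - y * (1 + r * s) ≠ 0) :
    HasDerivAt (fB y r)
    (y * (1 - r) / (1 + s) ^ 2 * (Real.log (1 + r * s) + Real.log (1 + s - y)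
        - Real.log (1 + s - y * (1 + r * s))) - y * r * s / ((1 + s) * (1 + s - y))) s := by
  have hnum : HasDerivAt (fun u : ℝ => y * (1 + r * u)) (y * r) s := by
    simpa using (((hasDerivAt_id s).const_mul r).const_add 1).const_mul y
  have hden : HasDerivAt (fun u : ℝ => 1 + u) 1 s := by
    simpa using (hasDerivAt_id s).const_add 1
  have hz : HasDerivAt (fun u : ℝ => y * (1 + r * u) / (1 + u))
      ((y * r * (1 + s) - y * (1 + r * s) * 1) / (1 + s) ^ 2) s := hnum.div hden h1
  have hl1 : HasDerivAt (fun u : ℝ => Real.log (1 + r * u)) (r / (1 + r * s)) s := by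
    have h : HasDerivAt (fun u : ℝ => 1 + r * u) r s := by
      simpa using ((hasDerivAt_id s).const_mul r).const_add 1
    simpa using h.log h2
  have hl2 : HasDerivAt (fun u : ℝ => Real.log (1 + u - y)) (1 / (1 + s - y)) s := by
    have h : HasDerivAt (fun u : ℝ => 1 + u - y) 1 s := by
      simpa using ((hasDerivAt_id s).const_add 1).sub_const y
    simpa using h.log h3
  have hl3 : HasDerivAt (fun u : ℝ => Real.log (1 + u - y * (1 + r * u)))
      ((1 - y * r) / (1 + s - y * (1 + r * s))) s := by
    have h : HasDerivAt (fun u : ℝ => 1 + u - y * (1 + r * u)) (1 - y * r) s := by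
      exact ((hasDerivAt_id s).const_add 1).sub hnum
    simpa using h.log h4
  have h := (hz.neg.mul hl1).add ((hz.const_sub 1).mul (hl2.sub hl3))
  unfold fB
  refine h.congr_deriv ?_
  simp only [Pi.neg_apply, Pi.sub_apply]
  have h1s : ((1:ℝ) + s) ^ 2 ≠ 0 := pow_ne_zero 2 h1
  field_simp
  ring

/-- The expanded form equals `MB`. -/
lemma mb_eq_f (y r s : ℝ) (hy : 0 < y) (h1 : 0 < 1 + s) (h2 : 0 < 1 + r * s)
    (h3 : 0 < 1 + s - y) (h4 : 0 < 1 + s - y * (1 + r * s)) :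
    MB (y * (1 + r * s) / (1 + s)) (y / (1 + s)) = fB y r s := by
  have e1 : (y / (1 + s)) / (y * (1 + r * s) / (1 + s)) = (1 + r * s)⁻¹ := by
    field_simp
  have hb : (1:ℝ) - y * (1 + r * s) / (1 + s) = (1 + s - y * (1 + r * s)) / (1 + s) := by
    field_simp
  have ha : (1:ℝ) - y / (1 + s) = (1 + s - y) / (1 + s) := by
    field_simp
  have e2 : (1 - y / (1 + s)) / (1 - y * (1 + r * s) / (1 + s))
      = (1 + s - y) / (1 + s - y * (1 + r * s)) := by
    rw [ha, hb, div_div_div_cancel_right₀]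
    exact h1.ne'
  unfold MB fB
  rw [e1, e2, Real.log_inv, Real.log_div h3.ne' h4.ne']
  ring

lemma mb_deriv_sum_nonneg (y r ε t : ℝ) (hy0 : 0 < y) (hr0 : 0 < r) (hr1 : r ≤ 1)
    (hε0 : 0 < ε) (hε1 : ε < 1) (hyε : y < 1 - ε) (ht0 : 0 < t) (htε : t ≤ ε) :
    0 ≤ (y * (1 - r) / (1 + t) ^ 2 * (Real.log (1 + r * t) + Real.log (1 + t - y)
          - Real.log (1 + t - y * (1 + r * t))) - y * r * t / ((1 + t) * (1 + t - y)))
      + (y * (1 - r) / (1 - t) ^ 2 * (Real.log (1 - r * t) + Real.log (1 - t - y)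
          - Real.log (1 - t - y * (1 - r * t))) + y * r * t / ((1 - t) * (1 - t - y))) := by
  obtain ⟨h1p, h2p, h3p, h4p⟩ := mb_pos_aux y r ε t hy0 hr0 hr1 hε0 hε1 hyε (by linarith) htε
  have h1m : (0:ℝ) < 1 - t := by linarith
  have h2m : (0:ℝ) < 1 - r * t := by nlinarith [mul_nonneg (show (0:ℝ) ≤ 1 - r by linarith) ht0.le]
  have h3m : (0:ℝ) < 1 - t - y := by linarith
  have h4m : (0:ℝ) < 1 - t - y * (1 - r * t) := by
    nlinarith [mul_nonneg (mul_nonneg hy0.le hr0.le) ht0.le]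
  have hqp := Real.log_le_sub_one_of_pos (div_pos h4p (mul_pos h3p h2p))
  rw [Real.log_div h4p.ne' (mul_pos h3p h2p).ne', Real.log_mul h3p.ne' h2p.ne'] at hqp
  have hqm := Real.log_le_sub_one_of_pos (div_pos h4m (mul_pos h3m h2m))
  rw [Real.log_div h4m.ne' (mul_pos h3m h2m).ne', Real.log_mul h3m.ne' h2m.ne'] at hqm
  have hcp : 0 ≤ y * (1 - r) / (1 + t) ^ 2 :=
    div_nonneg (mul_nonneg hy0.le (by linarith)) (by positivity)
  have hcm : 0 ≤ y * (1 - r) / (1 - t) ^ 2 :=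
    div_nonneg (mul_nonneg hy0.le (by linarith)) (by positivity)
  have e1 : y * (1 - r) / (1 + t) ^ 2 * (1 - (1 + t - y * (1 + r * t)) / ((1 + t - y) * (1 + r * t)))
      ≤ y * (1 - r) / (1 + t) ^ 2 * (Real.log (1 + r * t) + Real.log (1 + t - y)
          - Real.log (1 + t - y * (1 + r * t))) :=
    mul_le_mul_of_nonneg_left (by linarith) hcp
  have e2 : y * (1 - r) / (1 - t) ^ 2 * (1 - (1 - t - y * (1 - r * t)) / ((1 - t - y) * (1 - r * t)))
      ≤ y * (1 - r) / (1 - t) ^ 2 * (Real.log (1 - r * t) + Real.log (1 - t - y)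
          - Real.log (1 - t - y * (1 - r * t))) :=
    mul_le_mul_of_nonneg_left (by linarith) hcm
  have k1 : y * (1 - r) / (1 + t) ^ 2 * (1 - (1 + t - y * (1 + r * t)) / ((1 + t - y) * (1 + r * t)))
      - y * r * t / ((1 + t) * (1 + t - y))
      = -(y * r ^ 2 * t * (1 / ((1 + t - y) * (1 + r * t)))) := by
    have n1 := h1p.ne'; have n2 := h2p.ne'; have n3 := h3p.ne'
    field_simp
    ring
  have k2 : y * (1 - r) / (1 - t) ^ 2 * (1 - (1 - t - y * (1 - r * t)) / ((1 - t - y) * (1 - r * t)))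
      + y * r * t / ((1 - t) * (1 - t - y))
      = y * r ^ 2 * t * (1 / ((1 - t - y) * (1 - r * t))) := by
    have n1 := h1m.ne'; have n2 := h2m.ne'; have n3 := h3m.ne'
    field_simp
    ring
  have hle : (1 - t - y) * (1 - r * t) ≤ (1 + t - y) * (1 + r * t) := by
    nlinarith [mul_pos hr0 ht0, mul_nonneg (mul_nonneg hr0.le ht0.le) (show (0:ℝ) ≤ 1 - y by linarith)]
  have hdiv := one_div_le_one_div_of_le (mul_pos h3m h2m) hle
  have hmul : y * r ^ 2 * t * (1 / ((1 + t - y) * (1 + r * t)))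
      ≤ y * r ^ 2 * t * (1 / ((1 - t - y) * (1 - r * t))) :=
    mul_le_mul_of_nonneg_left hdiv (by positivity)
  linarith [e1, e2, k1, k2, hmul]

/-- For `y, r ∈ (0,1]`, `ε ∈ (0,1)` with `y < 1 − ε`:
`M_B(y(1 + rε)/(1 + ε), y/(1 + ε)) ≥ M_B(y(1 − rε)/(1 − ε), y/(1 − ε))`. -/
theorem mb_rel_error_ineq (y r ε : ℝ) (hy0 : 0 < y) (hy1 : y ≤ 1)
    (hr0 : 0 < r) (hr1 : r ≤ 1) (hε0 : 0 < ε) (hε1 : ε < 1)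
    (hyε : y < 1 - ε) :
    MB (y * (1 + r * ε) / (1 + ε)) (y / (1 + ε)) ≥
      MB (y * (1 - r * ε) / (1 - ε)) (y / (1 - ε)) := by
  have hpos : ∀ s : ℝ, -ε ≤ s → s ≤ ε →
      0 < 1 + s ∧ 0 < 1 + r * s ∧ 0 < 1 + s - y ∧ 0 < 1 + s - y * (1 + r * s) :=
    fun s hs hs' => mb_pos_aux y r ε s hy0 hr0 hr1 hε0 hε1 hyε hs hs'
  have hasD : ∀ t ∈ Set.Icc (0:ℝ) ε, HasDerivAt (fun u => fB y r u - fB y r (-u))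
      ((y * (1 - r) / (1 + t) ^ 2 * (Real.log (1 + r * t) + Real.log (1 + t - y)
          - Real.log (1 + t - y * (1 + r * t))) - y * r * t / ((1 + t) * (1 + t - y)))
        + (y * (1 - r) / (1 - t) ^ 2 * (Real.log (1 - r * t) + Real.log (1 - t - y)
          - Real.log (1 - t - y * (1 - r * t))) + y * r * t / ((1 - t) * (1 - t - y)))) t := by
    intro t ht
    obtain ⟨h1p, h2p, h3p, h4p⟩ := hpos t (by linarith [ht.1]) ht.2
    obtain ⟨h1m, h2m, h3m, h4m⟩ := hpos (-t) (by linarith [ht.2]) (by linarith [ht.1])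
    have hp := mb_hasDeriv y r t h1p.ne' h2p.ne' h3p.ne' h4p.ne'
    have hm := mb_hasDeriv y r (-t) h1m.ne' h2m.ne' h3m.ne' h4m.ne'
    rw [show (1:ℝ) + r * -t = 1 - r * t from by ring, show (1:ℝ) + -t = 1 - t from by ring] at hm
    have hcomp := hm.comp t (hasDerivAt_neg t)
    have h := hp.sub hcomp
    have heq : (y * (1 - r) / (1 + t) ^ 2 * (Real.log (1 + r * t) + Real.log (1 + t - y)
          - Real.log (1 + t - y * (1 + r * t))) - y * r * t / ((1 + t) * (1 + t - y)))
        - (y * (1 - r) / (1 - t) ^ 2 * (Real.log (1 - r * t) + Real.log (1 - t - y)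
          - Real.log (1 - t - y * (1 - r * t))) - y * r * -t / ((1 - t) * (1 - t - y))) * (-1)
        = (y * (1 - r) / (1 + t) ^ 2 * (Real.log (1 + r * t) + Real.log (1 + t - y)
          - Real.log (1 + t - y * (1 + r * t))) - y * r * t / ((1 + t) * (1 + t - y)))
        + (y * (1 - r) / (1 - t) ^ 2 * (Real.log (1 - r * t) + Real.log (1 - t - y)
          - Real.log (1 - t - y * (1 - r * t))) + y * r * t / ((1 - t) * (1 - t - y))) := by
      ring
    exact heq ▸ h
  have hmono : MonotoneOn (fun u => fB y r u - fB y r (-u)) (Set.Icc 0 ε) := by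
    apply monotoneOn_of_deriv_nonneg (convex_Icc 0 ε)
    · intro t ht
      exact (hasD t ht).continuousAt.continuousWithinAt
    · intro t ht
      rw [interior_Icc] at ht
      exact ((hasD t ⟨ht.1.le, ht.2.le⟩).differentiableAt).differentiableWithinAt
    · intro t ht
      rw [interior_Icc] at ht
      rw [(hasD t ⟨ht.1.le, ht.2.le⟩).deriv]
      exact mb_deriv_sum_nonneg y r ε t hy0 hr0 hr1 hε0 hε1 hyε ht.1 ht.2.le
  have h0 : fB y r 0 - fB y r (-0) ≤ fB y r ε - fB y r (-ε) :=
    hmono (Set.left_mem_Icc.mpr hε0.le) (Set.right_mem_Icc.mpr hε0.le) hε0.le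
  have h00 : fB y r 0 - fB y r (-0) = 0 := by norm_num
  obtain ⟨h1p, h2p, h3p, h4p⟩ := hpos ε (by linarith) le_rfl
  obtain ⟨h1m, h2m, h3m, h4m⟩ := hpos (-ε) le_rfl (by linarith)
  have hP : MB (y * (1 + r * ε) / (1 + ε)) (y / (1 + ε)) = fB y r ε :=
    mb_eq_f y r ε hy0 h1p h2p h3p h4p
  have hM : MB (y * (1 - r * ε) / (1 - ε)) (y / (1 - ε)) = fB y r (-ε) := by
    have a1 : y * (1 - r * ε) / (1 - ε) = y * (1 + r * -ε) / (1 + -ε) := by ring_nf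
    have a2 : y / (1 - ε) = y / (1 + -ε) := by ring_nf
    rw [a1, a2]
    exact mb_eq_f y r (-ε) hy0 h1m h2m h3m h4m
  rw [ge_iff_le, hP, hM]
  linarith [h0, h00]
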